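/- For every connected graph G of order n ≥ 2, the remoteness ρ(G) (the maximum over vertices v of the average distance from v to all other vertices) satisfies ρ(G) ≤ n/2, with equality if and only if G is a path. -/

import Mathlib

open Finset

section Aux

variable {V : Type*} {G : SimpleGraph V}

private lemma distGetVertLe (hG : G.Connected) {v u : V} (p : G.Walk v u) (k : ℕ) :
    G.dist v (p.getVert k) ≤ k := by
  induction p generalizing k with
  | nil =>
    rw [SimpleGraph.Walk.getVert_of_length_le _ (by simp)]
    simp [SimpleGraph.dist_self]
  | @cons a b c h q ih =>
    match k with
    | 0 => simp [SimpleGraph.Walk.getVert_zero, SimpleGraph.dist_self]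
    | k + 1 =>
      rw [SimpleGraph.Walk.getVert_cons_succ]
      obtain ⟨q', hq'⟩ := hG.exists_walk_length_eq_dist _ (q.getVert k)
      calc G.dist a (q.getVert k) ≤ (SimpleGraph.Walk.cons h q').length :=
            SimpleGraph.dist_le _
        _ = G.dist b (q.getVert k) + 1 := by simp [SimpleGraph.Walk.length_cons, hq']
        _ ≤ k + 1 := Nat.add_le_add_right (ih k) 1

private lemma existsDistEq (hG : G.Connected) (v u : V) {k : ℕ} (hk : k ≤ G.dist v u) :
    ∃ w, G.dist v w = k := by
  obtain ⟨p, hp⟩ := hG.exists_walk_length_eq_dist v u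
  refine ⟨p.getVert k, le_antisymm (distGetVertLe hG p k) ?_⟩
  have h1 : G.dist u (p.getVert k) ≤ p.length - k := by
    have := distGetVertLe hG p.reverse (p.length - k)
    rwa [SimpleGraph.Walk.getVert_reverse, Nat.sub_sub_self (hp ▸ hk)] at this
  have h2 := hG.dist_triangle (u := v) (v := p.getVert k) (w := u)
  rw [SimpleGraph.dist_comm] at h1
  omega

private lemma adjDistLe (hG : G.Connected) (v : V) {a b : V} (h : G.Adj a b) :
    G.dist v b ≤ G.dist v a + 1 := by
  obtain ⟨q, hq⟩ := hG.exists_walk_length_eq_dist v a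
  calc G.dist v b ≤ (q.concat h).length := SimpleGraph.dist_le _
    _ = G.dist v a + 1 := by rw [SimpleGraph.Walk.length_concat, hq]

private lemma existsAdjDist (hG : G.Connected) {v b : V} {k : ℕ} (h : G.dist v b = k + 1) :
    ∃ a, G.Adj a b ∧ G.dist v a = k := by
  obtain ⟨p, hp⟩ := hG.exists_walk_length_eq_dist v b
  rw [h] at hp
  have hadj : G.Adj (p.getVert k) (p.getVert (k + 1)) :=
    p.adj_getVert_succ (by omega)
  rw [show k + 1 = p.length by omega, SimpleGraph.Walk.getVert_length] at hadj
  refine ⟨p.getVert k, hadj, le_antisymm (distGetVertLe hG p k) ?_⟩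
  have := adjDistLe hG v hadj
  omega

private lemma levelCard (hG : G.Connected) (v u : V) [Fintype V] :
    G.dist v u ≤ (univ.filter (fun w => G.dist v w < G.dist v u)).card := by
  classical
  have h : ∀ k : ℕ, ∃ w, k < G.dist v u → G.dist v w = k := by
    intro k
    by_cases hk : k < G.dist v u
    · obtain ⟨w, hw⟩ := existsDistEq hG v u hk.le
      exact ⟨w, fun _ => hw⟩
    · exact ⟨v, fun h => absurd h hk⟩
  choose F hF using h
  calc G.dist v u = (Finset.range (G.dist v u)).card := (Finset.card_range _).symm
    _ ≤ _ := by
        apply Finset.card_le_card_of_injOn F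
        · intro k hk
          rw [Finset.mem_coe, Finset.mem_range] at hk
          simp [Finset.mem_filter, hF k hk, hk]
        · intro k1 h1 k2 h2 he
          rw [Finset.mem_coe, Finset.mem_range] at h1 h2
          rw [← hF k1 h1, ← hF k2 h2, he]

private lemma sumKey (hG : G.Connected) (v : V) [Fintype V] :
    2 * ∑ u, G.dist v u ≤ Fintype.card V * (Fintype.card V - 1) ∧
    (2 * ∑ u, G.dist v u = Fintype.card V * (Fintype.card V - 1) →
      Function.Injective (G.dist v)) := by
  classical
  set n := Fintype.card V with hn
  set P : Finset (V × V) := univ.filter (fun p => G.dist v p.2 < G.dist v p.1) with hP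
  set P' : Finset (V × V) := univ.filter (fun p => G.dist v p.1 < G.dist v p.2) with hP'
  have hSP : ∑ u, G.dist v u ≤ P.card := by
    calc ∑ u, G.dist v u
        ≤ ∑ u, (univ.filter (fun w => G.dist v w < G.dist v u)).card :=
          Finset.sum_le_sum (fun u _ => levelCard hG v u)
      _ = P.card := by
          rw [hP, Finset.card_filter, Fintype.sum_prod_type]
          exact Finset.sum_congr rfl fun u _ => by rw [Finset.card_filter]
  have hPP' : P.card = P'.card := by
    apply Finset.card_nbij' Prod.swap Prod.swap
    · intro p hp
      rw [Finset.mem_coe, Finset.mem_filter] at hp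
      rw [hP', Finset.mem_coe, Finset.mem_filter]
      exact ⟨Finset.mem_univ _, hp.2⟩
    · intro p hp
      rw [Finset.mem_coe, Finset.mem_filter] at hp
      rw [hP, Finset.mem_coe, Finset.mem_filter]
      exact ⟨Finset.mem_univ _, hp.2⟩
    · intro p _; simp
    · intro p _; simp
  have hdisj : Disjoint P P' := by
    rw [Finset.disjoint_filter]
    intro p _ h1 h2
    omega
  have hsub : P ∪ P' ⊆ univ.offDiag := by
    rintro ⟨x, y⟩ hp
    rw [Finset.mem_union, hP, hP', Finset.mem_filter, Finset.mem_filter] at hp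
    rw [Finset.mem_offDiag]
    refine ⟨Finset.mem_univ _, Finset.mem_univ _, ?_⟩
    intro h
    simp only at hp h
    subst h
    omega
  have hcard : P.card + P'.card ≤ n * n - n := by
    rw [← Finset.card_union_of_disjoint hdisj]
    calc (P ∪ P').card ≤ univ.offDiag.card := Finset.card_le_card hsub
      _ = n * n - n := by rw [Finset.offDiag_card, Finset.card_univ]
  have hmul : n * n - n = n * (n - 1) := by
    cases n with
    | zero => simp
    | succ m =>
        have h1 : (m + 1) * (m + 1) = (m + 1) * m + (m + 1) := by ring
        have h2 : m + 1 - 1 = m := rfl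
        rw [h2]
        omega
  constructor
  · omega
  · intro heq
    intro a b hab
    by_contra hne
    have hmem : (a, b) ∉ P ∪ P' := by
      rw [Finset.mem_union, hP, hP', Finset.mem_filter, Finset.mem_filter]
      simp only [hab]
      omega
    have hsub2 : P ∪ P' ⊆ univ.offDiag.erase (a, b) := by
      intro p hp
      rw [Finset.mem_erase]
      exact ⟨fun h => hmem (h ▸ hp), hsub hp⟩
    have hab' : (a, b) ∈ univ.offDiag := by
      rw [Finset.mem_offDiag]; exact ⟨Finset.mem_univ _, Finset.mem_univ _, hne⟩
    have hthis : P.card + P'.card ≤ n * n - n - 1 := by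
      rw [← Finset.card_union_of_disjoint hdisj]
      calc (P ∪ P').card ≤ (univ.offDiag.erase (a, b)).card := Finset.card_le_card hsub2
        _ = n * n - n - 1 := by
            rw [Finset.card_erase_of_mem hab', Finset.offDiag_card, Finset.card_univ]
    have hpos : 0 < n := Fintype.card_pos_iff.mpr ⟨v⟩
    have e1 : 2 * (∑ u, G.dist v u) ≤ P.card + P'.card := by
      rw [← hPP', two_mul]
      exact Nat.add_le_add hSP hSP
    have hone : 0 < n * n - n := by
      rw [hn, ← Finset.card_univ, ← Finset.offDiag_card]
      exact Finset.card_pos.mpr ⟨_, hab'⟩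
    have e2 : 2 * (∑ u, G.dist v u) ≤ n * n - n - 1 := e1.trans hthis
    rw [heq, ← hmul] at e2
    have e3 : n * n - n - 1 < n * n - n := Nat.sub_lt hone Nat.one_pos
    exact absurd (e2.trans_lt e3) (lt_irrefl _)

private lemma distLtCard (hG : G.Connected) (v u : V) [Fintype V] :
    G.dist v u < Fintype.card V := by
  classical
  have h1 := levelCard hG v u
  have h2 : (univ.filter (fun w => G.dist v w < G.dist v u)) ⊆ univ.erase u := by
    intro x hx
    rw [Finset.mem_filter] at hx
    rw [Finset.mem_erase]
    refine ⟨?_, Finset.mem_univ _⟩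
    rintro rfl
    exact absurd hx.2 (lt_irrefl _)
  have h3 := Finset.card_le_card h2
  rw [Finset.card_erase_of_mem (Finset.mem_univ u), Finset.card_univ] at h3
  have hpos : 0 < Fintype.card V := Fintype.card_pos_iff.mpr ⟨v⟩
  omega

private lemma injSum (hG : G.Connected) (v : V) [Fintype V]
    (hinj : Function.Injective (G.dist v)) :
    2 * ∑ u, G.dist v u = Fintype.card V * (Fintype.card V - 1) := by
  classical
  have himg : univ.image (G.dist v) = Finset.range (Fintype.card V) := by
    apply Finset.eq_of_subset_of_card_le
    · intro k hk
      rw [Finset.mem_image] at hk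
      obtain ⟨u, _, rfl⟩ := hk
      rw [Finset.mem_range]
      exact distLtCard hG v u
    · rw [Finset.card_range, Finset.card_image_of_injective _ hinj, Finset.card_univ]
  have h1 : ∑ u, G.dist v u = ∑ k ∈ Finset.range (Fintype.card V), k := by
    rw [← himg, Finset.sum_image (fun x _ y _ h => hinj h)]
  rw [h1, ← Finset.sum_range_id_mul_two (Fintype.card V), Nat.mul_comm]

private lemma isoOfInj (hG : G.Connected) (v : V) [Fintype V] {n : ℕ}
    (hn : Fintype.card V = n) (hinj : Function.Injective (G.dist v)) :
    Nonempty (G ≃g SimpleGraph.pathGraph n) := by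
  classical
  have hlt : ∀ u, G.dist v u < n := fun u => hn ▸ distLtCard hG v u
  have hbij : Function.Bijective (fun u => (⟨G.dist v u, hlt u⟩ : Fin n)) := by
    rw [Fintype.bijective_iff_injective_and_card]
    constructor
    · intro a b hab
      exact hinj (congrArg Fin.val hab)
    · simp [hn]
  refine ⟨⟨Equiv.ofBijective _ hbij, ?_⟩⟩
  intro a b
  rw [SimpleGraph.pathGraph_adj]
  simp only [Equiv.ofBijective_apply]
  constructor
  · rintro (h | h)
    · obtain ⟨c, hcb, hc⟩ := existsAdjDist hG (v := v) (b := b) (k := G.dist v a) h.symm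
      rwa [hinj hc] at hcb
    · obtain ⟨c, hca, hc⟩ := existsAdjDist hG (v := v) (b := a) (k := G.dist v b) h.symm
      exact (hinj hc ▸ hca).symm
  · intro hadj
    have h1 := adjDistLe hG v hadj
    have h2 := adjDistLe hG v hadj.symm
    have hne : G.dist v a ≠ G.dist v b := fun h => hadj.ne (hinj h)
    omega

private lemma isoDistLe {W : Type*} {G' : SimpleGraph W} (hG : G.Connected) (e : G ≃g G')
    (u v : V) : G'.dist (e u) (e v) ≤ G.dist u v := by
  obtain ⟨p, hp⟩ := hG.exists_walk_length_eq_dist u v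
  calc G'.dist (e u) (e v) ≤ (p.map e.toHom).length := SimpleGraph.dist_le _
    _ = G.dist u v := by rw [SimpleGraph.Walk.length_map, hp]

private lemma pathWalkLen {n : ℕ} {i j : Fin n} (p : (SimpleGraph.pathGraph n).Walk i j) :
    (j.val : ℤ) - i.val ≤ p.length := by
  induction p with
  | nil => simp
  | @cons a b c h q ih =>
    rw [SimpleGraph.pathGraph_adj] at h
    rw [SimpleGraph.Walk.length_cons]
    have : (b.val : ℤ) - a.val ≤ 1 := by omega
    push_cast
    omega

private lemma pathDistZero {n : ℕ} (hn2 : 2 ≤ n) (j : Fin n) :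
    (SimpleGraph.pathGraph n).dist ⟨0, by omega⟩ j = j.val := by
  obtain ⟨m, rfl⟩ : ∃ m, n = m + 1 := ⟨n - 1, by omega⟩
  have hc := SimpleGraph.pathGraph_connected m
  apply le_antisymm
  · induction j using Fin.induction with
    | zero => simp [show (⟨0, by omega⟩ : Fin (m + 1)) = 0 from rfl, SimpleGraph.dist_self]
    | succ i ih =>
      have hadj : (SimpleGraph.pathGraph (m + 1)).Adj i.castSucc i.succ := by
        rw [SimpleGraph.pathGraph_adj]
        left
        simp
      have := adjDistLe hc (⟨0, by omega⟩ : Fin (m + 1)) hadj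
      have hv : (i.succ : Fin (m + 1)).val = i.castSucc.val + 1 := by simp
      omega
  · obtain ⟨p, hp⟩ := hc.exists_walk_length_eq_dist (⟨0, by omega⟩ : Fin (m + 1)) j
    have := pathWalkLen p
    rw [hp] at this
    simp only [Fin.val_mk] at this
    omega

end Aux

theorem remoteness_le_half_order {V : Type*} [Fintype V] [Nonempty V]
    (G : SimpleGraph V) (hG : G.Connected)
    (n : ℕ) (hn : Fintype.card V = n) (hn2 : 2 ≤ n) :
    Finset.univ.sup' Finset.univ_nonempty
        (fun v => (∑ u, (G.dist v u : ℝ)) / (n - 1)) ≤ (n : ℝ) / 2 ∧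
    (Finset.univ.sup' Finset.univ_nonempty
        (fun v => (∑ u, (G.dist v u : ℝ)) / (n - 1)) = (n : ℝ) / 2 ↔
      Nonempty (G ≃g SimpleGraph.pathGraph n)) := by
  classical
  have hn1 : (1 : ℝ) ≤ (n : ℝ) := by exact_mod_cast Nat.one_le_of_lt hn2
  have hpos : (0 : ℝ) < (n : ℝ) - 1 := by
    have : (2 : ℝ) ≤ (n : ℝ) := by exact_mod_cast hn2
    linarith
  have hcast : ∀ v : V, (∑ u, (G.dist v u : ℝ)) = ((∑ u, G.dist v u : ℕ) : ℝ) := by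
    intro v; push_cast; rfl
  have hcastn : ((n * (n - 1) : ℕ) : ℝ) = (n : ℝ) * ((n : ℝ) - 1) := by
    push_cast [Nat.cast_sub (by omega : 1 ≤ n)]
    ring
  have hup : ∀ v : V, (∑ u, (G.dist v u : ℝ)) / ((n : ℝ) - 1) ≤ (n : ℝ) / 2 := by
    intro v
    have h := (sumKey hG v).1
    rw [hn] at h
    have h' : ((2 * ∑ u, G.dist v u : ℕ) : ℝ) ≤ ((n * (n - 1) : ℕ) : ℝ) := by
      exact_mod_cast h
    rw [hcastn] at h'
    push_cast at h'
    rw [div_le_div_iff₀ hpos (by norm_num : (0 : ℝ) < 2), hcast v]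
    push_cast
    linarith
  have hsup : Finset.univ.sup' Finset.univ_nonempty
      (fun v => (∑ u, (G.dist v u : ℝ)) / ((n : ℝ) - 1)) ≤ (n : ℝ) / 2 :=
    Finset.sup'_le _ _ fun v _ => hup v
  refine ⟨hsup, ?_, ?_⟩
  · intro h
    obtain ⟨v, -, hv⟩ := Finset.exists_mem_eq_sup' Finset.univ_nonempty
      (fun v => (∑ u, (G.dist v u : ℝ)) / ((n : ℝ) - 1))
    rw [hv] at h
    have hS : 2 * ∑ u, G.dist v u = n * (n - 1) := by
      rw [div_eq_iff hpos.ne'] at h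
      have h' : ((2 * ∑ u, G.dist v u : ℕ) : ℝ) = ((n * (n - 1) : ℕ) : ℝ) := by
        rw [hcastn]
        rw [hcast v] at h
        push_cast
        push_cast at h
        linarith
      exact_mod_cast h'
    have hinj := (sumKey hG v).2 (by rw [hn]; exact hS)
    exact isoOfInj hG v hn hinj
  · rintro ⟨e⟩
    have hc0 : 0 < n := by omega
    set z : Fin n := ⟨0, hc0⟩ with hz
    set v : V := e.symm z with hvdef
    have hdist : ∀ u, G.dist v u = (e u).val := by
      intro u
      have hev : e v = z := e.apply_symm_apply z
      have h1 : (SimpleGraph.pathGraph n).dist (e v) (e u) ≤ G.dist v u :=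
        isoDistLe hG e v u
      have h2 : G.dist v u ≤ (SimpleGraph.pathGraph n).dist (e v) (e u) := by
        have hpc : (SimpleGraph.pathGraph n).Connected := by
          obtain ⟨m, rfl⟩ : ∃ m, n = m + 1 := ⟨n - 1, by omega⟩
          exact SimpleGraph.pathGraph_connected m
        have := isoDistLe hpc e.symm (e v) (e u)
        rwa [e.symm_apply_apply, e.symm_apply_apply] at this
      have h3 : (SimpleGraph.pathGraph n).dist (e v) (e u) = (e u).val := by
        rw [hev, hz]
        exact pathDistZero hn2 (e u)
      omega
    have hinj : Function.Injective (G.dist v) := by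
      intro a b hab
      rw [hdist a, hdist b] at hab
      exact e.injective (Fin.val_injective hab)
    have hS := injSum hG v hinj
    rw [hn] at hS
    refine le_antisymm hsup ?_
    have hval : (∑ u, (G.dist v u : ℝ)) / ((n : ℝ) - 1) = (n : ℝ) / 2 := by
      rw [div_eq_div_iff hpos.ne' (by norm_num : (2 : ℝ) ≠ 0), hcast v]
      have h' : ((2 * ∑ u, G.dist v u : ℕ) : ℝ) = ((n * (n - 1) : ℕ) : ℝ) := by
        exact_mod_cast hS
      rw [hcastn] at h'
      push_cast at h' ⊢
      linarith
    calc (n : ℝ) / 2 = (∑ u, (G.dist v u : ℝ)) / ((n : ℝ) - 1) := hval.symm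
      _ ≤ _ := Finset.le_sup' (fun v => (∑ u, (G.dist v u : ℝ)) / ((n : ℝ) - 1)) (Finset.mem_univ v)
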